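/- For every natural number n, if P is a real polynomial of degree at most 2n+1 such that ⟨P,Q⟩₄ = 0 for every real polynomial Q of degree at most 2n+1, then P = 0 (i.e., the skew-symmetric form ⟨·,·⟩₄ is non-degenerate on the space of real polynomials of degree ≤ 2n+1). -/
import Mathlib

open Polynomial MeasureTheory

/-- The skew-symmetric bilinear form `⟨P,Q⟩₄ = (1/2) ∫_ℝ (P Q' − P' Q) e^{−2V}`. -/
noncomputable def skew4 (V P Q : Polynomial ℝ) : ℝ :=
  (1 / 2) * ∫ x : ℝ,
    (P.eval x * (derivative Q).eval x - (derivative P).eval x * Q.eval x) *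
      Real.exp (-2 * V.eval x)

open Filter Asymptotics Real

section Aux

variable {V : Polynomial ℝ}

lemma sk_Vne (hd : 1 < V.natDegree) : V ≠ 0 := fun h => by simp [h] at hd

lemma sk_tendsto_lin_sub (hd : 1 < V.natDegree) (hl : 0 < V.leadingCoeff) (a : ℝ) :
    Tendsto (fun x : ℝ => a * x - 2 * V.eval x) atTop atBot := by
  have hVne : V ≠ 0 := sk_Vne hd
  set H : Polynomial ℝ := C 2 * V - a • X with hH
  have hdegV : (1 : WithBot ℕ) < V.degree := by
    rw [degree_eq_natDegree hVne]
    exact_mod_cast hd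
  have hdeg2V : degree (a • (X : Polynomial ℝ)) < degree (C 2 * V) := by
    calc degree (a • (X : Polynomial ℝ)) ≤ degree (X : Polynomial ℝ) := degree_smul_le a (X : Polynomial ℝ)
    _ = 1 := degree_X
    _ < V.degree := hdegV
    _ = degree (C 2 * V) := (degree_C_mul (by norm_num : (2:ℝ) ≠ 0)).symm
  have hlcH : H.leadingCoeff = 2 * V.leadingCoeff := by
    rw [hH, leadingCoeff_sub_of_degree_lt hdeg2V, leadingCoeff_mul, leadingCoeff_C]
  have hdegH : 0 < H.degree := by
    rw [hH, degree_sub_eq_left_of_degree_lt hdeg2V, degree_C_mul (by norm_num : (2:ℝ) ≠ 0)]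
    exact lt_trans (by norm_num) hdegV
  have htop : Tendsto (fun x : ℝ => H.eval x) atTop atTop := by
    apply tendsto_atTop_of_leadingCoeff_nonneg _ hdegH
    rw [hlcH]; positivity
  have h2 := tendsto_neg_atTop_atBot.comp htop
  refine h2.congr fun x => ?_
  simp only [Function.comp_apply, hH, eval_sub, eval_mul, eval_C, eval_smul, eval_X,
    smul_eq_mul]
  ring

lemma sk_tendsto_mul_exp (hd : 1 < V.natDegree) (hl : 0 < V.leadingCoeff)
    (R : Polynomial ℝ) (a : ℝ) :
    Tendsto (fun x : ℝ => R.eval x * Real.exp (a * x - 2 * V.eval x)) atTop (nhds 0) := by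
  have h1 := R.tendsto_div_exp_atTop
  have h2 : Tendsto (fun x : ℝ => Real.exp ((a + 1) * x - 2 * V.eval x)) atTop (nhds 0) :=
    Real.tendsto_exp_atBot.comp (sk_tendsto_lin_sub hd hl (a + 1))
  have h3 := h1.mul h2
  rw [mul_zero] at h3
  refine h3.congr fun x => ?_
  rw [div_mul_eq_mul_div, mul_div_assoc, ← Real.exp_sub]
  congr 2
  ring

lemma sk_isBigO_atTop (hd : 1 < V.natDegree) (hl : 0 < V.leadingCoeff) (R : Polynomial ℝ) :
    (fun x : ℝ => R.eval x * Real.exp (-2 * V.eval x)) =O[atTop] fun x => Real.exp (-x) := by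
  have h := ((sk_tendsto_mul_exp hd hl R 1).isBigO_one ℝ).mul
    (isBigO_refl (fun x : ℝ => Real.exp (-x)) atTop)
  refine h.congr (fun x => ?_) fun x => one_mul _
  rw [mul_assoc, ← Real.exp_add]
  congr 2
  ring

lemma sk_isBigO_atBot (hd : 1 < V.natDegree) (he : Even V.natDegree)
    (hl : 0 < V.leadingCoeff) (R : Polynomial ℝ) :
    (fun x : ℝ => R.eval x * Real.exp (-2 * V.eval x)) =O[atBot] fun x => Real.exp x := by
  set Vn : Polynomial ℝ := V.comp (-X) with hVn
  set Rn : Polynomial ℝ := R.comp (-X) with hRn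
  have hX : ((-X : Polynomial ℝ)).natDegree = 1 := by
    rw [natDegree_neg, natDegree_X]
  have hdn : 1 < Vn.natDegree := by
    rw [hVn, natDegree_comp, hX, mul_one]; exact hd
  have hln : 0 < Vn.leadingCoeff := by
    rw [hVn, leadingCoeff_comp (by rw [hX]; norm_num)]
    have h1 : ((-X : Polynomial ℝ)).leadingCoeff = -1 := by
      rw [leadingCoeff_neg, leadingCoeff_X]
    rw [h1, he.neg_one_pow, mul_one]
    exact hl
  have h := (sk_isBigO_atTop hdn hln Rn).comp_tendsto
    (tendsto_neg_atBot_atTop : Tendsto (Neg.neg : ℝ → ℝ) atBot atTop)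
  refine h.congr (fun x => ?_) fun x => by simp
  simp only [Function.comp_apply, hVn, hRn, eval_comp, eval_neg, eval_X, neg_neg]

lemma sk_integrable (hd : 1 < V.natDegree) (he : Even V.natDegree)
    (hl : 0 < V.leadingCoeff) (R : Polynomial ℝ) :
    Integrable (fun x : ℝ => R.eval x * Real.exp (-2 * V.eval x)) := by
  have hc : Continuous fun x : ℝ => R.eval x * Real.exp (-2 * V.eval x) := by
    apply (R.continuous_aeval).mul
    exact Real.continuous_exp.comp (by fun_prop)
  refine hc.locallyIntegrable.integrable_of_isBigO_atBot_atTop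
    (sk_isBigO_atBot hd he hl R) ⟨Set.Iic 0, Iic_mem_atBot 0, integrableOn_exp_Iic 0⟩
    (sk_isBigO_atTop hd hl R) ⟨Set.Ioi 0, Ioi_mem_atTop 0, ?_⟩
  simpa using exp_neg_integrableOn_Ioi 0 one_pos

lemma sk_sq_zero (hd : 1 < V.natDegree) (he : Even V.natDegree)
    (hl : 0 < V.leadingCoeff) (S : Polynomial ℝ)
    (hS : ∫ x : ℝ, (S.eval x) ^ 2 * Real.exp (-2 * V.eval x) = 0) : S = 0 := by
  have hi : Integrable (fun x : ℝ => (S.eval x) ^ 2 * Real.exp (-2 * V.eval x)) := by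
    have := sk_integrable hd he hl (S ^ 2)
    simpa only [eval_pow] using this
  have h0 : 0 ≤ fun x : ℝ => (S.eval x) ^ 2 * Real.exp (-2 * V.eval x) := by
    intro x
    exact mul_nonneg (sq_nonneg _) (Real.exp_pos _).le
  rw [integral_eq_zero_iff_of_nonneg h0 hi] at hS
  have hc : Continuous fun x : ℝ => (S.eval x) ^ 2 * Real.exp (-2 * V.eval x) := by
    apply ((S.continuous_aeval).pow 2).mul
    exact Real.continuous_exp.comp (by fun_prop)
  have hz : (fun x : ℝ => (S.eval x) ^ 2 * Real.exp (-2 * V.eval x)) = 0 :=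
    (hc.ae_eq_iff_eq volume continuous_const).mp hS
  apply Polynomial.funext
  intro r
  have := congrFun hz r
  simp only [Pi.zero_apply, mul_eq_zero] at this
  rcases this with h | h
  · simpa [eval_zero] using pow_eq_zero_iff (n := 2) (by norm_num) |>.mp h
  · exact absurd h (Real.exp_ne_zero _)

lemma sk_exists_root {P : Polynomial ℝ} (hodd : Odd P.natDegree) : ∃ r : ℝ, P.eval r = 0 := by
  have hne : P ≠ 0 := by
    intro h
    rw [h, natDegree_zero] at hodd
    simp [Nat.odd_iff] at hodd
  -- reduce to the case of positive leading coefficient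
  suffices H : ∀ Q : Polynomial ℝ, Odd Q.natDegree → 0 < Q.leadingCoeff → ∃ r, Q.eval r = 0 by
    rcases lt_trichotomy 0 P.leadingCoeff with hpos | hzero | hneg
    · exact H P hodd hpos
    · exact absurd hzero.symm (leadingCoeff_ne_zero.mpr hne)
    · obtain ⟨r, hr⟩ := H (-P) (by rwa [natDegree_neg]) (by rw [leadingCoeff_neg]; linarith)
      exact ⟨r, by simpa using hr⟩
  intro Q hoddQ hposQ
  have hQpos : 0 < Q.natDegree := Nat.pos_of_ne_zero (by
    intro h0; rw [h0] at hoddQ; simp [Nat.odd_iff] at hoddQ)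
  have hQne : Q ≠ 0 := fun h => by simp [h] at hQpos
  have hQdeg : 0 < Q.degree := by
    rw [degree_eq_natDegree hQne]
    exact_mod_cast hQpos
  have htop : Tendsto (fun x : ℝ => Q.eval x) atTop atTop :=
    Q.tendsto_atTop_of_leadingCoeff_nonneg hQdeg hposQ.le
  have hbot : Tendsto (fun x : ℝ => Q.eval x) atBot atBot := by
    have hX : ((-X : Polynomial ℝ)).natDegree = 1 := by rw [natDegree_neg, natDegree_X]
    set Qn : Polynomial ℝ := Q.comp (-X) with hQn
    have hdn' : Qn.natDegree = Q.natDegree := by rw [hQn, natDegree_comp, hX, mul_one]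
    have hQnne : Qn ≠ 0 := by
      intro hqz
      rw [hqz, natDegree_zero] at hdn'
      omega
    have hdegn : 0 < Qn.degree := by
      rw [degree_eq_natDegree hQnne]
      exact_mod_cast hdn' ▸ hQpos
    have hlcn : Qn.leadingCoeff ≤ 0 := by
      rw [hQn, leadingCoeff_comp (by rw [hX]; norm_num),
        show ((-X : Polynomial ℝ)).leadingCoeff = -1 by rw [leadingCoeff_neg, leadingCoeff_X],
        hoddQ.neg_one_pow]
      linarith
    have hbot' : Tendsto (fun x : ℝ => Qn.eval x) atTop atBot :=
      tendsto_atBot_of_leadingCoeff_nonpos Qn hdegn hlcn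
    have h2 := hbot'.comp (tendsto_neg_atBot_atTop : Tendsto (Neg.neg : ℝ → ℝ) atBot atTop)
    refine h2.congr fun x => ?_
    simp [hQn, eval_comp, Function.comp]
  obtain ⟨r, hr⟩ := ((Q.continuous_aeval).surjective htop hbot) 0
  exact ⟨r, by simpa using hr⟩

end Aux

/-- Non-degeneracy of the skew form on polynomials of degree ≤ 2n+1. -/
theorem skew4_nondegenerate
    (D : ℕ) (hD : 2 ≤ D) (hDeven : Even D)
    (V : Polynomial ℝ) (hVdeg : V.natDegree = D) (hVlead : 0 < V.leadingCoeff)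
    (n : ℕ) (P : Polynomial ℝ) (hP : P.natDegree ≤ 2 * n + 1)
    (h : ∀ Q : Polynomial ℝ, Q.natDegree ≤ 2 * n + 1 → skew4 V P Q = 0) :
    P = 0 := by
  have hd : 1 < V.natDegree := by omega
  have he : Even V.natDegree := hVdeg ▸ hDeven
  by_contra hne
  by_cases hdeg : P.natDegree = 2 * n + 1
  · -- odd degree: P has a real root
    obtain ⟨r, hr⟩ := sk_exists_root (P := P) (by rw [hdeg]; exact ⟨n, by ring⟩)
    obtain ⟨Q, hQ⟩ := (dvd_iff_isRoot.mpr hr : (X - C r) ∣ P)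
    have hQne : Q ≠ 0 := fun hq => hne (by rw [hQ, hq, mul_zero])
    have hQdvd : Q ∣ P := ⟨X - C r, by rw [hQ, mul_comm]⟩
    have hQdeg : Q.natDegree ≤ 2 * n + 1 := le_trans (natDegree_le_of_dvd hQdvd hne) hP
    have hzero := h Q hQdeg
    have hcomp : skew4 V P Q
        = (1 / 2) * ∫ x : ℝ, -((Q.eval x) ^ 2 * Real.exp (-2 * V.eval x)) := by
      unfold skew4
      congr 1
      apply integral_congr_ae
      filter_upwards with x
      rw [hQ]
      simp only [derivative_mul, derivative_sub, derivative_X, derivative_C, eval_mul,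
        eval_add, eval_sub, eval_X, eval_C, sub_zero, one_mul]
      ring
    rw [hcomp, integral_neg] at hzero
    have hint : ∫ x : ℝ, (Q.eval x) ^ 2 * Real.exp (-2 * V.eval x) = 0 := by linarith
    exact hQne (sk_sq_zero hd he hVlead Q hint)
  · -- degree ≤ 2n : pair with X * P
    have hPdeg : P.natDegree ≤ 2 * n := by omega
    have hXP : (X * P).natDegree ≤ 2 * n + 1 := by
      rw [natDegree_mul X_ne_zero hne, natDegree_X]
      omega
    have hzero := h (X * P) hXP
    have hcomp : skew4 V P (X * P)
        = (1 / 2) * ∫ x : ℝ, (P.eval x) ^ 2 * Real.exp (-2 * V.eval x) := by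
      unfold skew4
      congr 1
      apply integral_congr_ae
      filter_upwards with x
      simp only [derivative_mul, derivative_X, eval_mul, eval_add, eval_X, one_mul]
      ring
    rw [hcomp] at hzero
    have hint : ∫ x : ℝ, (P.eval x) ^ 2 * Real.exp (-2 * V.eval x) = 0 := by linarith
    exact hne (sk_sq_zero hd he hVlead P hint)
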